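/- For every f ∈ [−1,1]ⁿ and every 1 ≤ k ≤ n, the matrix I_{f+1} restricted to the hyperplane 𝔛₀ = {x ∈ ℝⁿ : ∑ᵢ xᵢ = 0} is a contraction with respect to the Ky Fan k-norm: ‖I_{f+1}x‖_{(k)} ≤ ‖x‖_{(k)} for all x ∈ 𝔛₀. -/

import Mathlib

open Finset

/-- The symmetric matrix `Θ_x`: off-diagonal entries `(xᵢ+xⱼ)/(2n)`, diagonal chosen
so that every row sums to zero. -/
noncomputable def Theta (n : ℕ) (x : Fin n → ℝ) : Matrix (Fin n) (Fin n) ℝ :=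
  fun i j =>
    if i = j then -(∑ k ∈ Finset.univ.erase i, (x i + x k) / (2 * n))
    else (x i + x j) / (2 * n)

/-- `I_x = Iₙ + Θ_x`. -/
noncomputable def Imat (n : ℕ) (x : Fin n → ℝ) : Matrix (Fin n) (Fin n) ℝ :=
  1 + Theta n x

/-- `E f`: the constant vector whose entries all equal the mean of `f`. -/
noncomputable def meanVec (n : ℕ) (f : Fin n → ℝ) : Fin n → ℝ :=
  fun _ => (∑ i, f i) / n

/-- The sup norm `‖x‖_∞`. -/
noncomputable def linf (n : ℕ) (x : Fin n → ℝ) : ℝ :=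
  sSup (Set.range fun i => |x i|)

/-- The Ky Fan `k`-norm: the sum of the `k` largest absolute values of the entries,
i.e. the maximum of `∑_{i ∈ S} |xᵢ|` over subsets `S` of cardinality `k`. -/
noncomputable def kyFan (n k : ℕ) (x : Fin n → ℝ) : ℝ :=
  sSup ((fun S : Finset (Fin n) => ∑ i ∈ S, |x i|) '' {S | S.card = k})

/-- The dual Ky Fan `k`-norm: `max(‖x‖_∞, ‖x‖₁ / k)`. -/
noncomputable def kyFanDual (n k : ℕ) (x : Fin n → ℝ) : ℝ :=
  max (linf n x) ((∑ i, |x i|) / k)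

/-- A symmetric norm on `ℝⁿ`: a norm invariant under coordinate permutations
and sign changes. -/
structure IsSymmNorm (n : ℕ) (N : (Fin n → ℝ) → ℝ) : Prop where
  add_le : ∀ x y, N (x + y) ≤ N x + N y
  smul : ∀ (c : ℝ) (x), N (c • x) = |c| * N x
  pos : ∀ x, x ≠ 0 → 0 < N x
  perm : ∀ (σ : Equiv.Perm (Fin n)) (x), N (x ∘ σ) = N x
  sign : ∀ (ε x : Fin n → ℝ), (∀ i, ε i = 1 ∨ ε i = -1) → N (ε * x) = N x

/-- `|a-b| + |a+b| ≤ 2` when both are in `[-1,1]`. -/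
lemma aux_abs (a b : ℝ) (ha : |a| ≤ 1) (hb : |b| ≤ 1) : |a - b| + |a + b| ≤ 2 := by
  rw [abs_le] at ha hb
  rcases abs_cases (a - b) with ⟨h1, _⟩ | ⟨h1, _⟩ <;>
    rcases abs_cases (a + b) with ⟨h2, _⟩ | ⟨h2, _⟩ <;> linarith

/-- LP bound: a fractional selection of size ≤ k of nonneg values is at most the
best integral selection of size k. -/
lemma lp_bound (n k : ℕ) (hk : 1 ≤ k) (hkn : k ≤ n) (w c : Fin n → ℝ)
    (hw : ∀ j, 0 ≤ w j) (hc0 : ∀ j, 0 ≤ c j) (hc1 : ∀ j, c j ≤ 1)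
    (hcs : ∑ j, c j ≤ (k : ℝ)) :
    ∃ S : Finset (Fin n), S.card = k ∧ ∑ j, c j * w j ≤ ∑ i ∈ S, w i := by
  obtain ⟨S₀, -, hS₀⟩ : ∃ t ⊆ (univ : Finset (Fin n)), t.card = k :=
    Finset.exists_subset_card_eq (by simpa using hkn)
  set 𝒮 := (univ : Finset (Finset (Fin n))).filter (fun S => S.card = k) with h𝒮
  have hne : 𝒮.Nonempty := ⟨S₀, by simp [h𝒮, hS₀]⟩
  obtain ⟨S, hSmem, hSmax⟩ := 𝒮.exists_max_image (fun S => ∑ i ∈ S, w i) hne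
  have hScard : S.card = k := by simpa [h𝒮] using hSmem
  have hSne : S.Nonempty := Finset.card_pos.1 (by omega)
  obtain ⟨i0, hi0S, hi0⟩ := S.exists_min_image w hSne
  have key : ∀ j, j ∉ S → w j ≤ w i0 := by
    intro j hj
    have hjE : j ∉ S.erase i0 := fun h => hj (Finset.mem_of_mem_erase h)
    have hcard : (insert j (S.erase i0)).card = k := by
      rw [Finset.card_insert_of_notMem hjE, Finset.card_erase_of_mem hi0S]; omega
    have hmax := hSmax (insert j (S.erase i0)) (by simp [h𝒮, hcard])
    rw [Finset.sum_insert hjE, Finset.sum_erase_eq_sub hi0S] at hmax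
    linarith
  refine ⟨S, hScard, ?_⟩
  have hA : ∑ j ∈ S, c j * w j ≤ (∑ j ∈ S, w j) - k * w i0 + w i0 * ∑ j ∈ S, c j := by
    have h1 : ∀ j ∈ S, c j * w j ≤ (w j - w i0) + w i0 * c j := by
      intro j hj
      have h := hi0 j hj
      nlinarith [hc0 j, hc1 j]
    calc ∑ j ∈ S, c j * w j ≤ ∑ j ∈ S, ((w j - w i0) + w i0 * c j) := Finset.sum_le_sum h1
      _ = (∑ j ∈ S, w j) - k * w i0 + w i0 * ∑ j ∈ S, c j := by
          rw [Finset.sum_add_distrib, Finset.sum_sub_distrib, Finset.sum_const, hScard,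
            ← Finset.mul_sum]
          ring
  have hB : ∑ j ∈ Sᶜ, c j * w j ≤ w i0 * ∑ j ∈ Sᶜ, c j := by
    rw [Finset.mul_sum]
    refine Finset.sum_le_sum ?_
    intro j hj
    have hj' : j ∉ S := by simpa using hj
    nlinarith [hc0 j, key j hj']
  have hsplit : ∑ j, c j * w j = ∑ j ∈ S, c j * w j + ∑ j ∈ Sᶜ, c j * w j :=
    (Finset.sum_add_sum_compl S _).symm
  have hcsplit : ∑ j ∈ S, c j + ∑ j ∈ Sᶜ, c j = ∑ j, c j := Finset.sum_add_sum_compl S c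
  have hθ : 0 ≤ w i0 := hw i0
  have hmul : w i0 * (∑ j, c j) ≤ w i0 * k := mul_le_mul_of_nonneg_left hcs hθ
  calc ∑ j, c j * w j = ∑ j ∈ S, c j * w j + ∑ j ∈ Sᶜ, c j * w j := hsplit
    _ ≤ ((∑ j ∈ S, w j) - k * w i0 + w i0 * ∑ j ∈ S, c j) + w i0 * ∑ j ∈ Sᶜ, c j := by
        linarith
    _ = (∑ j ∈ S, w j) - k * w i0 + w i0 * (∑ j, c j) := by
        rw [← hcsplit]; ring
    _ ≤ ∑ j ∈ S, w j := by linarith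

/-- Proposition 2.4: for `f ∈ [−1,1]ⁿ`, `I_{f+1}` is a contraction for the Ky Fan
`k`-norm on the hyperplane of vectors whose coordinates sum to zero. -/
theorem stmt_5 (n k : ℕ) (hn : 0 < n) (hk : 1 ≤ k) (hkn : k ≤ n)
    (f x : Fin n → ℝ) (hf : ∀ i, f i ∈ Set.Icc (-1 : ℝ) 1) (hx : ∑ i, x i = 0) :
    kyFan n k ((Imat n (f + 1)).mulVec x) ≤ kyFan n k x := by
  have hn' : (n : ℝ) ≠ 0 := Nat.cast_ne_zero.2 hn.ne'
  have hnpos : (0:ℝ) < n := by positivity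
  set F := ∑ l, f l with hF
  set D : Matrix (Fin n) (Fin n) ℝ := fun i j =>
    if i = j then -((f i + F / n) / 2) else (f j - f i) / (2 * n) with hD
  have habsf : ∀ i, |f i| ≤ 1 := fun i => abs_le.2 ⟨(hf i).1, (hf i).2⟩
  -- pointwise matrix identity
  have hmat : ∀ i j, Imat n (f + 1) i j = D i j + (f i + 1) / n := by
    intro i j
    simp only [Imat, Theta, hD, Matrix.add_apply, Matrix.one_apply, Pi.add_apply, Pi.one_apply]
    by_cases h : i = j
    · subst h
      simp only [if_pos rfl, if_true]
      rw [Finset.sum_erase_eq_sub (Finset.mem_univ i)]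
      have hsum : ∑ l : Fin n, (f i + 1 + (f l + 1)) / (2 * n)
          = ((n : ℝ) * (f i + 2) + F) / (2 * n) := by
        rw [← Finset.sum_div]
        congr 1
        rw [show (fun l => f i + 1 + (f l + 1)) = fun l => (f i + 2) + f l from by
          funext l; ring]
        rw [Finset.sum_add_distrib, Finset.sum_const, Finset.card_univ, Fintype.card_fin,
          nsmul_eq_mul, hF]
      rw [hsum]
      field_simp
      ring
    · simp only [if_neg h]
      field_simp
      ring
  -- A x = D x on the hyperplane
  have hmv : ∀ i, (Imat n (f + 1)).mulVec x i = ∑ j, D i j * x j := by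
    intro i
    have h0 : (Imat n (f + 1)).mulVec x i = ∑ j, Imat n (f + 1) i j * x j := rfl
    rw [h0]
    calc ∑ j, Imat n (f + 1) i j * x j
        = ∑ j, (D i j * x j + (f i + 1) / n * x j) := by
          refine Finset.sum_congr rfl fun j _ => ?_
          rw [hmat i j]; ring
      _ = ∑ j, D i j * x j + (f i + 1) / n * ∑ j, x j := by
          rw [Finset.sum_add_distrib, Finset.mul_sum]
      _ = ∑ j, D i j * x j := by rw [hx]; ring
  -- row sums of |D| are ≤ 1
  have hrow : ∀ i, ∑ j, |D i j| ≤ 1 := by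
    intro i
    rw [← Finset.sum_erase_add _ _ (Finset.mem_univ i)]
    have hdiag : |D i i| = |∑ j, (f i + f j)| / (2 * n) := by
      have e1 : f i + F / n = (∑ j, (f i + f j)) / n := by
        rw [Finset.sum_add_distrib, Finset.sum_const, Finset.card_univ, Fintype.card_fin,
          nsmul_eq_mul, hF]
        field_simp
      simp only [hD, if_pos rfl]
      rw [abs_neg, abs_div, e1, abs_div]
      rw [abs_of_pos (by positivity : (0:ℝ) < (n:ℝ)), abs_of_pos (by norm_num : (0:ℝ) < 2)]
      rw [div_div]
      ring_nf
    have hoff : ∑ j ∈ univ.erase i, |D i j| = (∑ j ∈ univ.erase i, |f j - f i|) / (2 * n) := by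
      rw [Finset.sum_div]
      refine Finset.sum_congr rfl fun j hj => ?_
      have hji : j ≠ i := (Finset.mem_erase.1 hj).1
      simp only [hD, if_neg (Ne.symm hji)]
      rw [abs_div, abs_of_pos (by positivity : (0:ℝ) < 2 * n)]
    rw [hdiag, hoff, ← add_div, div_le_one (by positivity)]
    have h1 : |∑ j, (f i + f j)| ≤ ∑ j, |f i + f j| := Finset.abs_sum_le_sum_abs _ _
    have h2 : ∑ j, |f i + f j| = ∑ j ∈ univ.erase i, |f i + f j| + |f i + f i| :=
      (Finset.sum_erase_add _ _ (Finset.mem_univ i)).symm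
    have h3 : ∑ j ∈ univ.erase i, (|f j - f i| + |f i + f j|) ≤ ∑ j ∈ univ.erase i, 2 := by
      refine Finset.sum_le_sum fun j _ => ?_
      have := aux_abs (f j) (f i) (habsf j) (habsf i)
      have hcomm : |f i + f j| = |f j + f i| := by rw [add_comm]
      linarith
    have h4 : ∑ j ∈ univ.erase i, (2:ℝ) = 2 * (n - 1) := by
      rw [Finset.sum_const, Finset.card_erase_of_mem (Finset.mem_univ i), Finset.card_univ,
        Fintype.card_fin, nsmul_eq_mul]
      have h1n : 1 ≤ n := hn
      push_cast [Nat.cast_sub h1n]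
      ring
    have h5 : |f i + f i| ≤ 2 := by
      have := habsf i
      rw [abs_le] at this ⊢
      constructor <;> linarith [this.1, this.2]
    have h6 : ∑ j ∈ univ.erase i, |f j - f i| + ∑ j ∈ univ.erase i, |f i + f j|
        = ∑ j ∈ univ.erase i, (|f j - f i| + |f i + f j|) := (Finset.sum_add_distrib).symm
    have hnn : (1:ℝ) ≤ n := by exact_mod_cast hn
    linarith
  -- column sums equal row sums
  have hcol : ∀ j, ∑ i, |D i j| ≤ 1 := by
    intro j
    have : ∑ i, |D i j| = ∑ i, |D j i| := by
      refine Finset.sum_congr rfl fun i _ => ?_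
      by_cases h : i = j
      · subst h; rfl
      · simp only [hD, if_neg h, if_neg (Ne.symm h)]
        rw [abs_div, abs_div, abs_sub_comm]
    rw [this]; exact hrow j
  -- bounded above
  have hbddx : BddAbove ((fun S : Finset (Fin n) => ∑ i ∈ S, |x i|) '' {S | S.card = k}) :=
    Set.Finite.bddAbove ((Set.toFinite _).image _)
  obtain ⟨S₀, -, hS₀⟩ : ∃ t ⊆ (univ : Finset (Fin n)), t.card = k :=
    Finset.exists_subset_card_eq (by simpa using hkn)
  -- final assembly
  show sSup _ ≤ kyFan n k x
  apply csSup_le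
  · exact ⟨∑ i ∈ S₀, |(Imat n (f + 1)).mulVec x i|, ⟨S₀, hS₀, rfl⟩⟩
  · rintro y ⟨S, hS, rfl⟩
    have hScard : S.card = k := hS
    set c : Fin n → ℝ := fun j => ∑ i ∈ S, |D i j| with hc
    have hc0 : ∀ j, 0 ≤ c j := fun j => Finset.sum_nonneg fun i _ => abs_nonneg _
    have hc1 : ∀ j, c j ≤ 1 := fun j =>
      le_trans (Finset.sum_le_sum_of_subset_of_nonneg (Finset.subset_univ S)
        (fun i _ _ => abs_nonneg _)) (hcol j)
    have hcs : ∑ j, c j ≤ (k : ℝ) := by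
      simp only [hc]
      rw [Finset.sum_comm]
      calc ∑ i ∈ S, ∑ j, |D i j| ≤ ∑ i ∈ S, (1:ℝ) := Finset.sum_le_sum fun i _ => hrow i
        _ = k := by rw [Finset.sum_const, hScard, nsmul_eq_mul, mul_one]
    obtain ⟨T, hTcard, hTle⟩ := lp_bound n k hk hkn (fun j => |x j|) c
      (fun j => abs_nonneg _) hc0 hc1 hcs
    have h1 : ∑ i ∈ S, |(Imat n (f + 1)).mulVec x i| ≤ ∑ j, c j * |x j| := by
      calc ∑ i ∈ S, |(Imat n (f + 1)).mulVec x i|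
          = ∑ i ∈ S, |∑ j, D i j * x j| := by
            refine Finset.sum_congr rfl fun i _ => ?_
            rw [hmv i]
        _ ≤ ∑ i ∈ S, ∑ j, |D i j| * |x j| := by
            refine Finset.sum_le_sum fun i _ => ?_
            refine le_trans (Finset.abs_sum_le_sum_abs _ _) (le_of_eq ?_)
            exact Finset.sum_congr rfl fun j _ => abs_mul _ _
        _ = ∑ j, ∑ i ∈ S, |D i j| * |x j| := Finset.sum_comm
        _ = ∑ j, c j * |x j| := by
            refine Finset.sum_congr rfl fun j _ => ?_
            rw [hc, Finset.sum_mul]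
    have h2 : ∑ i ∈ T, |x i| ≤ kyFan n k x := le_csSup hbddx ⟨T, hTcard, rfl⟩
    exact (h1.trans hTle).trans h2
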